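/- (König–Rados) Let F be a finite field with q elements, let a : ℤ/(q−1) → F be a vector of coefficients, and let f(x) = a₀ + a₁x + ⋯ + a_{q−2}x^{q−2} ∈ F[x]. Then the number of distinct nonzero roots of f in F equals (q − 1) − r, where r is the rank of the (q−1) × (q−1) circulant matrix circ(a) over F. -/

import Mathlib

/-- In a finite field, `|F| - 1 ≠ 0`. -/
instance instNeZeroCardFieldSubOne (F : Type*) [Field F] [Fintype F] :
    NeZero (Fintype.card F - 1) :=
  ⟨Nat.sub_ne_zero_of_lt Fintype.one_lt_card⟩

section aux

variable {M : Type*} [Monoid M]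

lemma pow_mod_of_pow_eq_one' {u : M} {m : ℕ} (hu : u ^ m = 1) (n : ℕ) :
    u ^ (n % m) = u ^ n := by
  conv_rhs => rw [← Nat.div_add_mod n m]
  rw [pow_add, pow_mul, hu, one_pow, one_mul]

lemma pow_val_add' {u : M} {m : ℕ} [NeZero m] (hu : u ^ m = 1) (x y : ZMod m) :
    u ^ (x + y).val = u ^ x.val * u ^ y.val := by
  rw [ZMod.val_add, pow_mod_of_pow_eq_one' hu, pow_add]

lemma pow_val_neg' {G : Type*} [Group G] {u : G} {m : ℕ} [NeZero m] (hu : u ^ m = 1)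
    (x : ZMod m) : u ^ (-x).val = (u ^ x.val)⁻¹ := by
  have h : u ^ x.val * u ^ (-x).val = 1 := by
    rw [← pow_val_add' hu, add_neg_cancel, ZMod.val_zero, pow_zero]
  exact (inv_eq_of_mul_eq_one_right h).symm

lemma koenig_rados_aux (F : Type*) [Field F] [Fintype F] [DecidableEq F] {m : ℕ} [NeZero m]
    (hcardu : Fintype.card Fˣ = m) (a : ZMod m → F) :
    Set.ncard {x : F | x ≠ 0 ∧
        ∑ i : Fin m, a ((i : ℕ) : ZMod m) * x ^ (i : ℕ) = 0}
      = m - (Matrix.circulant a).rank := by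
  classical
  have hcardz : Fintype.card (ZMod m) = m := ZMod.card m
  obtain ⟨g⟩ : Nonempty (ZMod m ≃ Fˣ) := ⟨Fintype.equivOfCardEq (by rw [hcardz, hcardu])⟩
  let eqv : ZMod m ≃ Fin m :=
    { toFun := fun x => ⟨x.val, x.val_lt⟩
      invFun := fun p => ((p : ℕ) : ZMod m)
      left_inv := fun x => ZMod.natCast_rightInverse x
      right_inv := fun p => Fin.ext (ZMod.val_cast_of_lt p.isLt) }
  set f : F → F := fun x => ∑ t : ZMod m, a t * x ^ t.val with hf
  have hpoly : ∀ x : F, (∑ i : Fin m, a ((i : ℕ) : ZMod m) * x ^ (i : ℕ)) = f x := by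
    intro x
    refine Fintype.sum_equiv eqv.symm _ _ fun p => ?_
    show a _ * x ^ (p : ℕ) = a _ * x ^ (ZMod.val (((p : ℕ)) : ZMod m))
    rw [ZMod.val_cast_of_lt p.isLt]
    rfl
  set V : Matrix (ZMod m) (ZMod m) F := fun i j => ((g j : Fˣ) : F) ^ i.val with hV
  set d : ZMod m → F := fun k => f (((g k)⁻¹ : Fˣ) : F) with hd
  set D : Matrix (ZMod m) (ZMod m) F := Matrix.diagonal d with hD
  have hVdet : V.det ≠ 0 := by
    have hsub : V.submatrix eqv.symm eqv.symm =
        Matrix.transpose (Matrix.vandermonde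
          (fun p : Fin m => ((g ((p : ℕ) : ZMod m) : Fˣ) : F))) := by
      ext p q
      simp only [Matrix.submatrix_apply, Matrix.transpose_apply, Matrix.vandermonde, hV,
        Matrix.of_apply]
      show ((g ((q : ℕ) : ZMod m) : Fˣ) : F) ^ (((p : ℕ) : ZMod m)).val = _
      rw [ZMod.val_cast_of_lt p.isLt]
    have hdet : V.det = (Matrix.transpose (Matrix.vandermonde
        (fun p : Fin m => ((g ((p : ℕ) : ZMod m) : Fˣ) : F)))).det := by
      rw [← hsub, Matrix.det_submatrix_equiv_self]
    rw [hdet, Matrix.det_transpose, Matrix.det_vandermonde_ne_zero_iff]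
    intro p q hpq
    exact eqv.symm.injective (g.injective (Units.ext hpq))
  have hkey : Matrix.circulant a * V = V * D := by
    ext i k
    rw [Matrix.mul_apply, hD, Matrix.mul_diagonal]
    set w : Fˣ := g k with hw
    have hwm : w ^ m = 1 := by rw [← hcardu]; exact pow_card_eq_one
    have step1 : ∑ j : ZMod m, Matrix.circulant a i j * V j k
        = ∑ t : ZMod m, a t * ((w : F) ^ i.val * (((w⁻¹ : Fˣ) : F)) ^ t.val) := by
      refine Fintype.sum_equiv (Equiv.subLeft i) _ _ fun t => ?_
      simp only [Matrix.circulant_apply, Equiv.subLeft_apply, sub_sub_cancel, hV]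
      have hwm' : w⁻¹ ^ m = 1 := by rw [inv_pow, hwm, inv_one]
      have hu : w⁻¹ ^ (i - t).val = w⁻¹ ^ i.val * (w⁻¹ ^ t.val)⁻¹ := by
        rw [sub_eq_add_neg, pow_val_add' hwm', pow_val_neg' hwm']
      have hkey2 : w ^ t.val = w ^ i.val * w⁻¹ ^ (i - t).val := by
        rw [hu, inv_pow, inv_pow, inv_inv, mul_inv_cancel_left]
      have hconv : ((w : F)) ^ t.val
          = (w : F) ^ i.val * (((w⁻¹ : Fˣ) : F)) ^ (i - t).val := by
        exact_mod_cast congrArg (Units.val) hkey2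
      show a (i - t) * ((w : F)) ^ t.val = _
      rw [hconv]
    rw [step1, hV, hd, hf]
    rw [Finset.mul_sum]
    refine Finset.sum_congr rfl fun t _ => ?_
    ring
  have hVunit : IsUnit V.det := Ne.isUnit hVdet
  have hrank : (Matrix.circulant a).rank = D.rank := by
    rw [← Matrix.rank_mul_eq_left_of_isUnit_det V (Matrix.circulant a) hVunit, hkey,
      Matrix.rank_mul_eq_right_of_isUnit_det V D hVunit]
  have hrankD : D.rank = Fintype.card {k : ZMod m // d k ≠ 0} := Matrix.rank_diagonal d
  set S : Set F := {x : F | x ≠ 0 ∧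
      ∑ i : Fin m, a ((i : ℕ) : ZMod m) * x ^ (i : ℕ) = 0} with hS
  have hequiv : {k : ZMod m // d k = 0} ≃ S := by
    have e1 : {k : ZMod m // d k = 0} ≃ {u : Fˣ // f (((u⁻¹ : Fˣ)) : F) = 0} :=
      Equiv.subtypeEquiv g (fun k => Iff.rfl)
    have e2 : {u : Fˣ // f (((u⁻¹ : Fˣ)) : F) = 0} ≃ {u : Fˣ // f ((u : Fˣ) : F) = 0} :=
      Equiv.subtypeEquiv (Equiv.inv Fˣ) (fun u => by simp)
    have e3 : {u : Fˣ // f ((u : Fˣ) : F) = 0} ≃ S := {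
      toFun := fun u => ⟨((u : Fˣ) : F), (u : Fˣ).ne_zero, by rw [hpoly]; exact u.2⟩
      invFun := fun x => ⟨Units.mk0 x.1 x.2.1, by
        have hx := x.2.2
        rw [hpoly] at hx
        simpa using hx⟩
      left_inv := fun u => Subtype.ext (Units.ext rfl)
      right_inv := fun x => Subtype.ext rfl }
    exact (e1.trans e2).trans e3
  have hcount : S.ncard = Fintype.card {k : ZMod m // d k = 0} := by
    rw [Set.ncard_eq_toFinset_card' S, Set.toFinset_card]
    exact (Fintype.card_congr hequiv).symm
  have hcompl : Fintype.card {k : ZMod m // d k ≠ 0}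
      = m - Fintype.card {k : ZMod m // d k = 0} := by
    have := Fintype.card_subtype_compl (fun k : ZMod m => d k = 0)
    simpa [hcardz] using this
  have hle : Fintype.card {k : ZMod m // d k = 0} ≤ m := by
    have := Fintype.card_subtype_le (fun k : ZMod m => d k = 0)
    rwa [hcardz] at this
  rw [hrank, hrankD, hcompl, hcount, Nat.sub_sub_self hle]

end aux

/-- (König–Rados) The number of distinct nonzero roots in a finite field `F` with `q`
elements of `f(x) = a₀ + a₁x + ⋯ + a_{q−2}x^{q−2}` equals `(q − 1) − r`, where `r` is the
rank of the `(q−1) × (q−1)` circulant matrix built from the coefficient vector `a`. -/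
theorem stmt5 (F : Type*) [Field F] [Fintype F]
    (a : ZMod (Fintype.card F - 1) → F) :
    Set.ncard {x : F | x ≠ 0 ∧
        ∑ i : Fin (Fintype.card F - 1), a ((i : ℕ) : ZMod (Fintype.card F - 1)) * x ^ (i : ℕ) = 0}
      = (Fintype.card F - 1) - (Matrix.circulant a).rank := by
  letI := Classical.decEq F
  exact koenig_rados_aux F (Fintype.card_units F) a
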